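/- (Consistency of the dense unpaired GMM estimator.) Under Assumption 2 (Assumption 1 with centered variables and bounded fourth moments; rank(Cov(I,X)) = d; weight matrices W_N → W₀ in probability with W₀ positive definite), the GMM estimator β̂_GMM(W_N) := argmin_β ĝ_N(β)ᵀ W_N ĝ_N(β), where ĝ_N(β) := (1/n)Σ_{i=1}^n I_i Y_i − ((1/ñ)Σ_{j=1}^ñ Ĩ_j X̃_jᵀ)β, converges in probability to β* as N → ∞, i.e., for every ε > 0, P(‖β̂_GMM(W_N) − β*‖₂ > ε) → 0. -/

import Mathlib

open MeasureTheory ProbabilityTheory Filter Matrix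
open scoped Topology NNReal ENNReal

noncomputable section

/-- Cross-covariance matrix of two centered random vectors (equal to `E[U Vᵀ]`
for centered `U, V`). -/
def covMat {Ω : Type*} [MeasurableSpace Ω] (μ : Measure Ω) {ι κ : Type*}
    [Fintype ι] [Fintype κ] (U : Ω → ι → ℝ) (V : Ω → κ → ℝ) : Matrix ι κ ℝ :=
  Matrix.of fun i j => ∫ ω, U ω i * V ω j ∂μ

/-- Cross-covariance vector of a centered random vector and a centered
random variable. -/
def covVec {Ω : Type*} [MeasurableSpace Ω] (μ : Measure Ω) {ι : Type*}
    [Fintype ι] (U : Ω → ι → ℝ) (Y : Ω → ℝ) : ι → ℝ :=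
  fun i => ∫ ω, U ω i * Y ω ∂μ

/-- Variance (covariance) matrix of a random vector. -/
def varMat {Ω : Type*} [MeasurableSpace Ω] (μ : Measure Ω) {ι : Type*} [Fintype ι]
    (Z : Ω → ι → ℝ) : Matrix ι ι ℝ :=
  Matrix.of fun i j =>
    ∫ ω, Z ω i * Z ω j ∂μ - (∫ ω, Z ω i ∂μ) * (∫ ω, Z ω j ∂μ)

/-- Euclidean (ℓ2) norm of a finite-dimensional real vector. -/
def norm2 {ι : Type*} [Fintype ι] (v : ι → ℝ) : ℝ := Real.sqrt (∑ i, v i ^ 2)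

/-- ℓ0 "norm": number of nonzero entries. -/
def sparsity {ι : Type*} [Fintype ι] (v : ι → ℝ) : ℕ :=
  (Finset.univ.filter fun i => v i ≠ 0).card

/-- ℓ2 → ℓ2 operator norm of a real matrix. -/
def opNorm {ι κ : Type*} [Fintype ι] [Fintype κ] (A : Matrix ι κ ℝ) : ℝ :=
  sSup {y : ℝ | ∃ x : κ → ℝ, norm2 x ≤ 1 ∧ y = norm2 (A *ᵥ x)}

/-- Empirical cross-covariance matrix `Ĉov(Ĩ,X̃)` from the first `nt` observations. -/
def covHat {Ω : Type*} {m d : ℕ} (It : ℕ → Ω → Fin m → ℝ) (Xt : ℕ → Ω → Fin d → ℝ)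
    (nt : ℕ) (ω : Ω) : Matrix (Fin m) (Fin d) ℝ :=
  Matrix.of fun k l => (nt : ℝ)⁻¹ * ∑ j ∈ Finset.range nt, It j ω k * Xt j ω l

/-- Empirical cross-covariance `Ĉov(I,Y)` from the first `n` observations. -/
def covYHat {Ω : Type*} {m : ℕ} (I : ℕ → Ω → Fin m → ℝ) (Y : ℕ → Ω → ℝ)
    (n : ℕ) (ω : Ω) : Fin m → ℝ :=
  fun k => (n : ℝ)⁻¹ * ∑ i ∈ Finset.range n, I i ω k * Y i ω

/-- Sample moment `ĝ_N(β) = (1/n) Σ I_i Y_i − ((1/ñ) Σ Ĩ_j X̃_jᵀ) β`. -/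
def ghat {Ω : Type*} {m d : ℕ} (I : ℕ → Ω → Fin m → ℝ) (Y : ℕ → Ω → ℝ)
    (It : ℕ → Ω → Fin m → ℝ) (Xt : ℕ → Ω → Fin d → ℝ)
    (n nt : ℕ) (ω : Ω) (b : Fin d → ℝ) : Fin m → ℝ :=
  fun k => covYHat I Y n ω k - (covHat It Xt nt ω *ᵥ b) k


namespace GMMAux

lemma norm2_nonneg {ι : Type*} [Fintype ι] (v : ι → ℝ) : 0 ≤ norm2 v := Real.sqrt_nonneg _

lemma norm2_sq {ι : Type*} [Fintype ι] (v : ι → ℝ) : norm2 v ^ 2 = ∑ i, v i ^ 2 :=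
  Real.sq_sqrt (Finset.sum_nonneg fun i _ => sq_nonneg _)

lemma norm2_eq_zero {ι : Type*} [Fintype ι] {v : ι → ℝ} (h : norm2 v = 0) : v = 0 := by
  have h2 : ∑ i, v i ^ 2 = 0 := by
    have := norm2_sq v; rw [h] at this; simpa using this.symm
  funext i
  have := (Finset.sum_eq_zero_iff_of_nonneg (fun i _ => sq_nonneg (v i))).1 h2 i (Finset.mem_univ i)
  exact pow_eq_zero_iff (by norm_num) |>.1 this

lemma norm2_le_of_entries {k : ℕ} (v : Fin k → ℝ) {η : ℝ} (hη : 0 ≤ η)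
    (h : ∀ i, |v i| ≤ η) : norm2 v ≤ Real.sqrt k * η := by
  have : ∑ i, v i ^ 2 ≤ (k : ℝ) * η ^ 2 := by
    calc ∑ i, v i ^ 2 ≤ ∑ _i : Fin k, η ^ 2 := by
          refine Finset.sum_le_sum fun i _ => ?_
          rw [← sq_abs]
          exact pow_le_pow_left₀ (abs_nonneg _) (h i) 2
      _ = (k : ℝ) * η ^ 2 := by simp [mul_comm]
  calc norm2 v ≤ Real.sqrt ((k : ℝ) * η ^ 2) := Real.sqrt_le_sqrt this
    _ = Real.sqrt k * η := by
        rw [Real.sqrt_mul (by positivity), Real.sqrt_sq hη]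

lemma abs_dot_le {k : ℕ} (v w : Fin k → ℝ) : |v ⬝ᵥ w| ≤ norm2 v * norm2 w := by
  have h := Finset.sum_mul_sq_le_sq_mul_sq Finset.univ v w
  have : |v ⬝ᵥ w| = Real.sqrt ((∑ i, v i * w i) ^ 2) := by
    rw [Real.sqrt_sq_eq_abs]; rfl
  rw [this]
  calc Real.sqrt ((∑ i, v i * w i) ^ 2)
      ≤ Real.sqrt ((∑ i, v i ^ 2) * ∑ i, w i ^ 2) := Real.sqrt_le_sqrt h
    _ = norm2 v * norm2 w := Real.sqrt_mul (Finset.sum_nonneg fun i _ => sq_nonneg _) _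

lemma dot_le {k : ℕ} (v w : Fin k → ℝ) : v ⬝ᵥ w ≤ norm2 v * norm2 w :=
  (le_abs_self _).trans (abs_dot_le v w)

def frob {m d : ℕ} (A : Matrix (Fin m) (Fin d) ℝ) : ℝ := Real.sqrt (∑ k, ∑ l, A k l ^ 2)

lemma frob_nonneg {m d : ℕ} (A : Matrix (Fin m) (Fin d) ℝ) : 0 ≤ frob A := Real.sqrt_nonneg _

lemma norm2_mulVec_le {m d : ℕ} (A : Matrix (Fin m) (Fin d) ℝ) (x : Fin d → ℝ) :
    norm2 (A *ᵥ x) ≤ frob A * norm2 x := by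
  have hrow : ∀ kk : Fin m, (A *ᵥ x) kk ^ 2 ≤ (∑ l, A kk l ^ 2) * ∑ l, x l ^ 2 := by
    intro kk
    have : (A *ᵥ x) kk = ∑ l, A kk l * x l := rfl
    rw [this]
    exact Finset.sum_mul_sq_le_sq_mul_sq Finset.univ _ _
  have hsum : ∑ kk, (A *ᵥ x) kk ^ 2 ≤ (∑ kk, ∑ l, A kk l ^ 2) * ∑ l, x l ^ 2 := by
    rw [Finset.sum_mul]
    exact Finset.sum_le_sum fun kk _ => hrow kk
  calc norm2 (A *ᵥ x) ≤ Real.sqrt ((∑ kk, ∑ l, A kk l ^ 2) * ∑ l, x l ^ 2) :=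
        Real.sqrt_le_sqrt hsum
    _ = frob A * norm2 x :=
        Real.sqrt_mul (Finset.sum_nonneg fun _ _ => Finset.sum_nonneg fun _ _ => sq_nonneg _) _

lemma frob_le_of_entries {m d : ℕ} (A : Matrix (Fin m) (Fin d) ℝ) {η : ℝ} (hη : 0 ≤ η)
    (h : ∀ k l, |A k l| ≤ η) : frob A ≤ Real.sqrt (m * d) * η := by
  have : ∑ k, ∑ l, A k l ^ 2 ≤ ((m : ℝ) * d) * η ^ 2 := by
    calc ∑ k, ∑ l, A k l ^ 2 ≤ ∑ _k : Fin m, ∑ _l : Fin d, η ^ 2 := by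
          refine Finset.sum_le_sum fun k _ => Finset.sum_le_sum fun l _ => ?_
          rw [← sq_abs]; exact pow_le_pow_left₀ (abs_nonneg _) (h k l) 2
      _ = ((m : ℝ) * d) * η ^ 2 := by simp [mul_assoc, mul_comm, mul_left_comm]
  calc frob A ≤ Real.sqrt (((m : ℝ) * d) * η ^ 2) := Real.sqrt_le_sqrt this
    _ = Real.sqrt (m * d) * η := by rw [Real.sqrt_mul (by positivity), Real.sqrt_sq hη]

lemma quad_abs_le {m : ℕ} (M : Matrix (Fin m) (Fin m) ℝ) (x : Fin m → ℝ) :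
    |x ⬝ᵥ (M *ᵥ x)| ≤ frob M * norm2 x ^ 2 :=
  calc |x ⬝ᵥ (M *ᵥ x)| ≤ norm2 x * norm2 (M *ᵥ x) := abs_dot_le _ _
    _ ≤ norm2 x * (frob M * norm2 x) := by
        have := norm2_mulVec_le M x
        nlinarith [norm2_nonneg x, norm2_nonneg (M *ᵥ x), frob_nonneg M]
    _ = frob M * norm2 x ^ 2 := by ring

lemma norm2_smul {k : ℕ} (c : ℝ) (v : Fin k → ℝ) : norm2 (c • v) = |c| * norm2 v := by
  unfold norm2
  have : ∑ i, (c • v) i ^ 2 = c ^ 2 * ∑ i, v i ^ 2 := by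
    rw [Finset.mul_sum]; refine Finset.sum_congr rfl fun i _ => by simp [mul_pow]
  rw [this, Real.sqrt_mul (sq_nonneg _), Real.sqrt_sq_eq_abs]

lemma norm2_add_le {k : ℕ} (v w : Fin k → ℝ) :
    norm2 (fun i => v i + w i) ≤ norm2 v + norm2 w := by
  have hv := (WithLp.equiv 2 (Fin k → ℝ)).symm v
  have key : ∀ u : Fin k → ℝ, norm2 u = ‖(WithLp.equiv 2 (Fin k → ℝ)).symm u‖ := by
    intro u
    rw [EuclideanSpace.norm_eq]
    unfold norm2
    congr 1
    refine Finset.sum_congr rfl fun i _ => ?_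
    rw [Real.norm_eq_abs, sq_abs]; rfl
  rw [key, key, key]
  have : (WithLp.equiv 2 (Fin k → ℝ)).symm (fun i => v i + w i)
      = (WithLp.equiv 2 (Fin k → ℝ)).symm v + (WithLp.equiv 2 (Fin k → ℝ)).symm w := by
    apply (WithLp.equiv 2 (Fin k → ℝ)).injective
    simp only [Equiv.apply_symm_apply]
    rfl
  rw [this]
  exact norm_add_le _ _


lemma norm2_eq_norm {k : ℕ} (u : Fin k → ℝ) :
    norm2 u = ‖(WithLp.equiv 2 (Fin k → ℝ)).symm u‖ := by
  rw [EuclideanSpace.norm_eq]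
  unfold norm2
  congr 1
  refine Finset.sum_congr rfl fun i _ => ?_
  rw [Real.norm_eq_abs, sq_abs]; rfl

lemma sphere_min {m : ℕ} (hm : 0 < m) (f : (Fin m → ℝ) → ℝ) (hf : Continuous f)
    (hpos : ∀ x : Fin m → ℝ, norm2 x = 1 → 0 < f x) :
    ∃ c > 0, ∀ x : Fin m → ℝ, norm2 x = 1 → c ≤ f x := by
  set E := EuclideanSpace ℝ (Fin m)
  have hco : IsCompact (Metric.sphere (0 : E) 1) := isCompact_sphere _ _
  have hne : (Metric.sphere (0 : E) 1).Nonempty := by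
    refine ⟨EuclideanSpace.single ⟨0, hm⟩ (1 : ℝ), ?_⟩
    rw [mem_sphere_zero_iff_norm]
    rw [EuclideanSpace.norm_single]; norm_num
  have hg : Continuous fun y : E => f ((WithLp.equiv 2 (Fin m → ℝ)) y) :=
    hf.comp (PiLp.continuous_ofLp 2 _)
  obtain ⟨y0, hy0, hmin⟩ := hco.exists_isMinOn hne hg.continuousOn
  have hn0 : norm2 ((WithLp.equiv 2 (Fin m → ℝ)) y0) = 1 := by
    rw [norm2_eq_norm]
    simp only [Equiv.symm_apply_apply]
    simpa [dist_eq_norm] using hy0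
  refine ⟨f ((WithLp.equiv 2 (Fin m → ℝ)) y0), hpos _ hn0, fun x hx => ?_⟩
  have hxs : (WithLp.equiv 2 (Fin m → ℝ)).symm x ∈ Metric.sphere (0 : E) 1 := by
    have h1 : ‖(WithLp.equiv 2 (Fin m → ℝ)).symm x‖ = 1 := (norm2_eq_norm x).symm.trans hx
    simpa [dist_eq_norm] using h1
  have := hmin hxs
  simpa using this

lemma rank_inj {m d : ℕ} (A : Matrix (Fin m) (Fin d) ℝ) (hrank : A.rank = d) :
    ∀ x : Fin d → ℝ, A *ᵥ x = 0 → x = 0 := by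
  have h1 := LinearMap.finrank_range_add_finrank_ker A.mulVecLin
  rw [Module.finrank_fin_fun] at h1
  have hr : Module.finrank ℝ (LinearMap.range A.mulVecLin) = d := hrank
  have hker : Module.finrank ℝ (LinearMap.ker A.mulVecLin) = 0 := by omega
  have : LinearMap.ker A.mulVecLin = ⊥ := Submodule.finrank_eq_zero.1 hker
  intro x hx
  have : x ∈ LinearMap.ker A.mulVecLin := by
    simpa [LinearMap.mem_ker, Matrix.mulVecLin_apply] using hx
  rwa [‹LinearMap.ker A.mulVecLin = ⊥›, Submodule.mem_bot] at this

lemma exists_sigma {m d : ℕ} (hd : 0 < d) (S : Matrix (Fin m) (Fin d) ℝ)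
    (hinj : ∀ x : Fin d → ℝ, S *ᵥ x = 0 → x = 0) :
    ∃ σ > 0, ∀ x : Fin d → ℝ, σ * norm2 x ≤ norm2 (S *ᵥ x) := by
  have hcont : Continuous fun x : Fin d → ℝ => norm2 (S *ᵥ x) := by
    apply Real.continuous_sqrt.comp
    apply continuous_finset_sum
    intro k _
    have : Continuous fun x : Fin d → ℝ => (S *ᵥ x) k := by
      simp only [Matrix.mulVec, dotProduct]
      exact continuous_finset_sum _ fun l _ => (continuous_const.mul (continuous_apply l))
    exact this.pow 2
  obtain ⟨σ, hσ, hmin⟩ := sphere_min hd _ hcont (fun x hx => by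
    rcases lt_or_eq_of_le (Real.sqrt_nonneg (∑ i, (S *ᵥ x) i ^ 2)) with h | h
    · exact h
    · exfalso
      have h0 : norm2 (S *ᵥ x) = 0 := h.symm
      have : S *ᵥ x = 0 := by
        funext i
        have h2 : ∑ i, (S *ᵥ x) i ^ 2 = 0 := by
          have := Real.sqrt_eq_zero (Finset.sum_nonneg fun i _ => sq_nonneg _) |>.1 h0
          exact this
        have := (Finset.sum_eq_zero_iff_of_nonneg (fun i _ => sq_nonneg ((S *ᵥ x) i))).1 h2 i
          (Finset.mem_univ i)
        simpa using pow_eq_zero_iff (two_ne_zero) |>.1 this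
      have := hinj x this
      rw [this] at hx
      simp [norm2] at hx)
  refine ⟨σ, hσ, fun x => ?_⟩
  by_cases hx : norm2 x = 0
  · have : x = 0 := by
      funext i
      have h2 : ∑ i, x i ^ 2 = 0 :=
        Real.sqrt_eq_zero (Finset.sum_nonneg fun i _ => sq_nonneg _) |>.1 hx
      have := (Finset.sum_eq_zero_iff_of_nonneg (fun i _ => sq_nonneg (x i))).1 h2 i
        (Finset.mem_univ i)
      simpa using pow_eq_zero_iff (two_ne_zero) |>.1 this
    rw [hx, this]
    simp [norm2, Real.sqrt_nonneg]
  · have hpos : 0 < norm2 x := lt_of_le_of_ne (Real.sqrt_nonneg _) (Ne.symm hx)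
    set u := (norm2 x)⁻¹ • x with hu
    have hnu : norm2 u = 1 := by
      rw [hu, norm2_smul, abs_of_pos (inv_pos.2 hpos), inv_mul_cancel₀ (ne_of_gt hpos)]
    have := hmin u hnu
    have hSu : norm2 (S *ᵥ u) = (norm2 x)⁻¹ * norm2 (S *ᵥ x) := by
      rw [hu, Matrix.mulVec_smul, norm2_smul, abs_of_pos (inv_pos.2 hpos)]
    rw [hSu] at this
    calc σ * norm2 x ≤ ((norm2 x)⁻¹ * norm2 (S *ᵥ x)) * norm2 x := by
          exact mul_le_mul_of_nonneg_right this hpos.le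
      _ = norm2 (S *ᵥ x) := by field_simp

lemma exists_lambda {m : ℕ} (hm : 0 < m) (W0 : Matrix (Fin m) (Fin m) ℝ) (hW0 : W0.PosDef) :
    ∃ lam > 0, ∀ x : Fin m → ℝ, lam * norm2 x ^ 2 ≤ x ⬝ᵥ (W0 *ᵥ x) := by
  have hcont : Continuous fun x : Fin m → ℝ => x ⬝ᵥ (W0 *ᵥ x) := by
    simp only [dotProduct, Matrix.mulVec]
    apply continuous_finset_sum
    intro k _
    exact (continuous_apply k).mul
      (continuous_finset_sum _ fun l _ => (continuous_const.mul (continuous_apply l)))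
  obtain ⟨lam, hlam, hmin⟩ := sphere_min hm _ hcont (fun x hx => by
    have hx0 : x ≠ 0 := by
      intro h; rw [h] at hx; simp [norm2] at hx
    have := hW0.dotProduct_mulVec_pos hx0
    simpa using this)
  refine ⟨lam, hlam, fun x => ?_⟩
  by_cases hx : norm2 x = 0
  · have hx0 : x = 0 := by
      funext i
      have h2 : ∑ i, x i ^ 2 = 0 :=
        Real.sqrt_eq_zero (Finset.sum_nonneg fun i _ => sq_nonneg _) |>.1 hx
      have := (Finset.sum_eq_zero_iff_of_nonneg (fun i _ => sq_nonneg (x i))).1 h2 i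
        (Finset.mem_univ i)
      simpa using pow_eq_zero_iff (two_ne_zero) |>.1 this
    rw [hx, hx0]; simp
  · have hpos : 0 < norm2 x := lt_of_le_of_ne (Real.sqrt_nonneg _) (Ne.symm hx)
    set u := (norm2 x)⁻¹ • x with hu
    have hnu : norm2 u = 1 := by
      rw [hu, norm2_smul, abs_of_pos (inv_pos.2 hpos), inv_mul_cancel₀ (ne_of_gt hpos)]
    have hq := hmin u hnu
    have hqu : u ⬝ᵥ (W0 *ᵥ u) = ((norm2 x)⁻¹)^2 * (x ⬝ᵥ (W0 *ᵥ x)) := by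
      rw [hu, Matrix.mulVec_smul, smul_dotProduct, dotProduct_smul]
      simp [smul_eq_mul]; ring
    rw [hqu] at hq
    have h2 : lam * norm2 x ^ 2 ≤ (((norm2 x)⁻¹)^2 * (x ⬝ᵥ (W0 *ᵥ x))) * norm2 x ^ 2 :=
      mul_le_mul_of_nonneg_right hq (sq_nonneg _)
    calc lam * norm2 x ^ 2 ≤ (((norm2 x)⁻¹)^2 * (x ⬝ᵥ (W0 *ᵥ x))) * norm2 x ^ 2 := h2
      _ = x ⬝ᵥ (W0 *ᵥ x) := by field_simp


lemma norm2_neg {k : ℕ} (v : Fin k → ℝ) : norm2 (fun i => -v i) = norm2 v := by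
  unfold norm2; congr 1; exact Finset.sum_congr rfl fun i _ => by ring

lemma frob_sub_symm {m d : ℕ} (A B : Matrix (Fin m) (Fin d) ℝ) :
    frob (A - B) = frob (B - A) := by
  unfold frob; congr 1
  refine Finset.sum_congr rfl fun k _ => Finset.sum_congr rfl fun l _ => ?_
  rw [Matrix.sub_apply, Matrix.sub_apply]; ring

lemma det_bound {m d : ℕ} (hd : 0 < d) (hm : 0 < m)
    (S : Matrix (Fin m) (Fin d) ℝ) (W0 : Matrix (Fin m) (Fin m) ℝ) (βstar : Fin d → ℝ)
    (hinj : ∀ x : Fin d → ℝ, S *ᵥ x = 0 → x = 0) (hW0 : W0.PosDef) {δ : ℝ} (hδ : 0 < δ) :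
    ∃ η > 0, ∀ (Sh : Matrix (Fin m) (Fin d) ℝ) (vh : Fin m → ℝ)
      (Wh : Matrix (Fin m) (Fin m) ℝ) (bh : Fin d → ℝ),
      (∀ k l, |Sh k l - S k l| < η) → (∀ k, |vh k - (S *ᵥ βstar) k| < η) →
      (∀ k l, |Wh k l - W0 k l| < η) →
      (∀ b : Fin d → ℝ,
        (fun k => vh k - (Sh *ᵥ bh) k) ⬝ᵥ (Wh *ᵥ fun k => vh k - (Sh *ᵥ bh) k) ≤
        (fun k => vh k - (Sh *ᵥ b) k) ⬝ᵥ (Wh *ᵥ fun k => vh k - (Sh *ᵥ b) k)) →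
      norm2 (fun j => bh j - βstar j) ≤ δ := by
  obtain ⟨lam, hlam, hlow⟩ := exists_lambda hm W0 hW0
  obtain ⟨σ, hσ, hsig⟩ := exists_sigma hd S hinj
  set cS : ℝ := Real.sqrt (m * d) with hcSdef
  set cW : ℝ := Real.sqrt (m * m) with hcWdef
  set cv : ℝ := Real.sqrt m with hcvdef
  have hmR : (0 : ℝ) < m := by exact_mod_cast hm
  have hdR : (0 : ℝ) < d := by exact_mod_cast hd
  have hcS : 0 < cS := Real.sqrt_pos.2 (by positivity)
  have hcW : 0 < cW := Real.sqrt_pos.2 (by positivity)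
  have hcv : 0 < cv := Real.sqrt_pos.2 hmR
  set B : ℝ := norm2 βstar with hBdef
  have hB : 0 ≤ B := norm2_nonneg _
  set FW : ℝ := frob W0 with hFWdef
  have hFW : 0 ≤ FW := frob_nonneg _
  set CW : ℝ := FW + cW with hCWdef
  have hCW : 0 < CW := by linarith
  set A : ℝ := cv + cS * B with hAdef
  have hA : 0 < A := add_pos_of_pos_of_nonneg hcv (mul_nonneg hcS.le hB)
  set K : ℝ := Real.sqrt (2 * CW / lam) * A with hKdef
  have hK : 0 ≤ K := mul_nonneg (Real.sqrt_nonneg _) hA.le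
  have hAK : 0 < A + K := by linarith
  set η : ℝ := min 1 (min (lam / (2 * cW)) (min (σ / (2 * cS)) (δ * σ / (2 * (A + K)))))
    with hηdef
  have hη : 0 < η := by
    refine lt_min one_pos (lt_min (div_pos hlam (mul_pos two_pos hcW))
      (lt_min (div_pos hσ (mul_pos two_pos hcS))
        (div_pos (mul_pos hδ hσ) (mul_pos two_pos hAK))))
  have hη1 : η ≤ 1 := min_le_left _ _
  have hη2 : η ≤ lam / (2 * cW) := (min_le_right _ _).trans (min_le_left _ _)
  have hη3 : η ≤ σ / (2 * cS) :=
    (min_le_right _ _).trans ((min_le_right _ _).trans (min_le_left _ _))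
  have hη4 : η ≤ δ * σ / (2 * (A + K)) :=
    (min_le_right _ _).trans ((min_le_right _ _).trans (min_le_right _ _))
  clear_value K η
  refine ⟨η, hη, fun Sh vh Wh bh hSh hvh hWh hmin => ?_⟩
  -- entrywise bounds
  have hΔS : frob (Sh - S) ≤ cS * η := by
    have := frob_le_of_entries (Sh - S) hη.le
      (fun k l => by rw [Matrix.sub_apply]; exact (hSh k l).le)
    exact this
  have hΔW : frob (Wh - W0) ≤ cW * η := by
    have := frob_le_of_entries (Wh - W0) hη.le
      (fun k l => by rw [Matrix.sub_apply]; exact (hWh k l).le)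
    exact this
  have hΔv : norm2 (fun k => vh k - (S *ᵥ βstar) k) ≤ cv * η :=
    norm2_le_of_entries _ hη.le fun k => (hvh k).le
  clear_value cS cW cv B FW CW A
  -- quadratic form bounds for Wh
  have hWup : ∀ x : Fin m → ℝ, x ⬝ᵥ (Wh *ᵥ x) ≤ CW * norm2 x ^ 2 := by
    intro x
    have hsplit : Wh *ᵥ x = W0 *ᵥ x + (Wh - W0) *ᵥ x := by
      rw [Matrix.sub_mulVec]; abel
    rw [hsplit, dotProduct_add]
    have h1 : x ⬝ᵥ (W0 *ᵥ x) ≤ FW * norm2 x ^ 2 := by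
      rw [hFWdef]; exact (le_abs_self _).trans (quad_abs_le W0 x)
    have h2 : x ⬝ᵥ ((Wh - W0) *ᵥ x) ≤ (cW * η) * norm2 x ^ 2 := by
      refine (le_abs_self _).trans ((quad_abs_le _ x).trans ?_)
      exact mul_le_mul_of_nonneg_right hΔW (sq_nonneg _)
    have hη1' : (cW * η) * norm2 x ^ 2 ≤ cW * norm2 x ^ 2 := by
      have : cW * η ≤ cW := by nlinarith
      exact mul_le_mul_of_nonneg_right this (sq_nonneg _)
    have : CW * norm2 x ^ 2 = FW * norm2 x ^ 2 + cW * norm2 x ^ 2 := by rw [hCWdef]; ring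
    linarith
  have hWlow : ∀ x : Fin m → ℝ, (lam / 2) * norm2 x ^ 2 ≤ x ⬝ᵥ (Wh *ᵥ x) := by
    intro x
    have hsplit : Wh *ᵥ x = W0 *ᵥ x + (Wh - W0) *ᵥ x := by
      rw [Matrix.sub_mulVec]; abel
    rw [hsplit, dotProduct_add]
    have h1 : lam * norm2 x ^ 2 ≤ x ⬝ᵥ (W0 *ᵥ x) := hlow x
    have h2 : -((cW * η) * norm2 x ^ 2) ≤ x ⬝ᵥ ((Wh - W0) *ᵥ x) := by
      have habs := (quad_abs_le (Wh - W0) x)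
      have : frob (Wh - W0) * norm2 x ^ 2 ≤ (cW * η) * norm2 x ^ 2 :=
        mul_le_mul_of_nonneg_right hΔW (sq_nonneg _)
      have := habs.trans this
      linarith [neg_abs_le (x ⬝ᵥ ((Wh - W0) *ᵥ x))]
    have hce : cW * η ≤ lam / 2 := by
      rw [le_div_iff₀ (mul_pos two_pos hcW)] at hη2
      linarith
    have hmul : (cW * η) * norm2 x ^ 2 ≤ (lam / 2) * norm2 x ^ 2 :=
      mul_le_mul_of_nonneg_right hce (sq_nonneg _)
    linarith
  -- bound at βstar
  set gstar : Fin m → ℝ := fun k => vh k - (Sh *ᵥ βstar) k with hgsdef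
  have hgstar : norm2 gstar ≤ A * η := by
    have heq : gstar = fun k => (vh k - (S *ᵥ βstar) k) + ((S - Sh) *ᵥ βstar) k := by
      funext k; rw [Matrix.sub_mulVec]; simp only [Pi.sub_apply]; ring
    rw [heq]
    refine (norm2_add_le _ _).trans ?_
    have h2 : norm2 ((S - Sh) *ᵥ βstar) ≤ (cS * η) * B := by
      refine (norm2_mulVec_le _ _).trans ?_
      rw [frob_sub_symm, ← hBdef]
      exact mul_le_mul_of_nonneg_right hΔS hB
    have : A * η = cv * η + (cS * η) * B := by rw [hAdef]; ring
    linarith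
  set gb : Fin m → ℝ := fun k => vh k - (Sh *ᵥ bh) k with hgbdef
  have hQb : (lam / 2) * norm2 gb ^ 2 ≤ CW * (A * η) ^ 2 := by
    have h1 := hWlow gb
    have h2 := hmin βstar
    have h3 := hWup gstar
    have h4 : CW * norm2 gstar ^ 2 ≤ CW * (A * η) ^ 2 := by
      have := pow_le_pow_left₀ (norm2_nonneg gstar) hgstar 2
      exact mul_le_mul_of_nonneg_left this hCW.le
    calc (lam / 2) * norm2 gb ^ 2 ≤ gb ⬝ᵥ (Wh *ᵥ gb) := h1
      _ ≤ gstar ⬝ᵥ (Wh *ᵥ gstar) := h2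
      _ ≤ CW * norm2 gstar ^ 2 := h3
      _ ≤ CW * (A * η) ^ 2 := h4
  clear_value gstar gb
  have hgb : norm2 gb ≤ K * η := by
    have hsq : norm2 gb ^ 2 ≤ (K * η) ^ 2 := by
      have hK2 : (K * η) ^ 2 = (2 * CW / lam) * (A * η) ^ 2 := by
        rw [hKdef]
        rw [mul_pow, mul_pow, Real.sq_sqrt (div_nonneg (by linarith) hlam.le)]
        ring
      rw [hK2]
      rw [div_mul_eq_mul_div, le_div_iff₀ hlam]
      linarith
    have := Real.sqrt_le_sqrt hsq
    rwa [Real.sqrt_sq (norm2_nonneg _), Real.sqrt_sq (mul_nonneg hK hη.le)] at this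
  -- difference bound
  set e : Fin d → ℝ := fun j => bh j - βstar j with hedef
  have hShe : norm2 (Sh *ᵥ e) ≤ (A + K) * η := by
    have heq : Sh *ᵥ e = fun k => gstar k + (-(gb k)) := by
      funext k
      have : Sh *ᵥ e = Sh *ᵥ bh - Sh *ᵥ βstar := by
        rw [hedef]
        rw [show (fun j => bh j - βstar j) = bh - βstar from rfl, Matrix.mulVec_sub]
      rw [this]
      simp only [hgsdef, hgbdef, Pi.sub_apply]
      ring
    rw [heq]
    refine (norm2_add_le _ _).trans ?_
    rw [norm2_neg]
    linarith
  have hSe : norm2 (S *ᵥ e) ≤ (A + K) * η + (cS * η) * norm2 e := by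
    have heq : S *ᵥ e = fun k => (Sh *ᵥ e) k + ((S - Sh) *ᵥ e) k := by
      funext k; rw [Matrix.sub_mulVec]; simp only [Pi.sub_apply]; ring
    rw [heq]
    refine (norm2_add_le _ _).trans ?_
    have h2 : norm2 ((S - Sh) *ᵥ e) ≤ (cS * η) * norm2 e := by
      refine (norm2_mulVec_le _ _).trans ?_
      rw [frob_sub_symm]
      exact mul_le_mul_of_nonneg_right hΔS (norm2_nonneg _)
    linarith
  have hfin : σ * norm2 e ≤ (A + K) * η + (cS * η) * norm2 e := (hsig e).trans hSe
  have hcs2 : cS * η ≤ σ / 2 := by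
    rw [le_div_iff₀ (mul_pos two_pos hcS)] at hη3
    linarith
  have hne : 0 ≤ norm2 e := norm2_nonneg _
  have h5 : (σ / 2) * norm2 e ≤ (A + K) * η := by
    have := mul_le_mul_of_nonneg_right hcs2 hne
    linarith
  have h6 : (A + K) * η ≤ (A + K) * (δ * σ / (2 * (A + K))) :=
    mul_le_mul_of_nonneg_left hη4 hAK.le
  have h7 : (A + K) * (δ * σ / (2 * (A + K))) = δ * σ / 2 := by
    field_simp
  have h8 : (σ / 2) * norm2 e ≤ δ * σ / 2 := by
    rw [h7] at h6
    linarith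
  have h9 : σ * norm2 e ≤ σ * δ := by linarith
  exact le_of_mul_le_mul_left h9 hσ

variable {Ω : Type*} [MeasurableSpace Ω] {μ : Measure Ω} [IsProbabilityMeasure μ]

lemma memL4_mul_integrable {f g : Ω → ℝ} (hf : MemLp f 4 μ) (hg : MemLp g 4 μ) :
    Integrable (fun ω => f ω * g ω) μ := by
  exact MemLp.integrable_mul (p := 2) (q := 2) (hf.mono_exponent (by norm_num))
    (hg.mono_exponent (by norm_num))

lemma avg_tendsto {β : Type*} [MeasurableSpace β] (Z : ℕ → Ω → β) (φ : β → ℝ)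
    (hZ : ∀ i, Measurable (Z i)) (hφ : Measurable φ)
    (hindep : iIndepFun Z μ)
    (hident : ∀ i, IdentDistrib (Z i) (Z 0) μ μ)
    (hint : Integrable (fun ω => φ (Z 0 ω)) μ) :
    ∀ᵐ ω ∂μ, Tendsto (fun n : ℕ => (n : ℝ)⁻¹ * ∑ i ∈ Finset.range n, φ (Z i ω)) atTop
      (𝓝 (∫ ω, φ (Z 0 ω) ∂μ)) := by
  have h := strong_law_ae (fun i ω => φ (Z i ω)) hint
    (fun i j hij => (hindep.indepFun hij).comp hφ hφ)
    (fun i => (hident i).comp hφ)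
  filter_upwards [h] with ω hω
  simpa [smul_eq_mul] using hω



lemma meas_iUnion_le_sum {Ω : Type*} [MeasurableSpace Ω] (μ : Measure Ω) {a : ℕ}
    (s : Fin a → Set Ω) : μ (⋃ i, s i) ≤ ∑ i, μ (s i) := by
  exact measure_iUnion_fintype_le μ s

lemma meas_iUnion2_le_sum {Ω : Type*} [MeasurableSpace Ω] (μ : Measure Ω) {a b : ℕ}
    (s : Fin a → Fin b → Set Ω) : μ (⋃ i, ⋃ j, s i j) ≤ ∑ i, ∑ j, μ (s i j) :=
  (meas_iUnion_le_sum μ _).trans (Finset.sum_le_sum fun i _ => meas_iUnion_le_sum μ _)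

end GMMAux

/-- Consistency of the dense unpaired GMM estimator: under
Assumption 2 the GMM estimator `β̂_GMM(W_N) = argmin_β ĝ_N(β)ᵀ W_N ĝ_N(β)`
converges in probability to `β*` as `N → ∞`. -/
theorem stmt_5
    (m d : ℕ) (βstar : Fin d → ℝ)
    (Ω : Type*) [MeasurableSpace Ω] (μ : Measure Ω) [IsProbabilityMeasure μ]
    -- the two samples (X is latent in the first, Ỹ plays no role)
    (I : ℕ → Ω → Fin m → ℝ) (X : ℕ → Ω → Fin d → ℝ) (Y : ℕ → Ω → ℝ) (ε : ℕ → Ω → ℝ)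
    (It : ℕ → Ω → Fin m → ℝ) (Xt : ℕ → Ω → Fin d → ℝ)
    -- sample sizes n, ñ with N = n + ñ and n/N → τ, ñ/N → τ̃
    (n nt : ℕ → ℕ) (hN : ∀ N, n N + nt N = N)
    (τ τt : ℝ) (hτ : τ ∈ Set.Ioo (0:ℝ) 1) (hτt : τt ∈ Set.Ioo (0:ℝ) 1)
    (hτlim : Tendsto (fun N => (n N : ℝ) / N) atTop (𝓝 τ))
    (hτtlim : Tendsto (fun N => (nt N : ℝ) / N) atTop (𝓝 τt))
    -- measurability
    (hmeas : ∀ i, Measurable fun ω => (I i ω, X i ω, Y i ω))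
    (hmeast : ∀ j, Measurable fun ω => (It j ω, Xt j ω))
    -- i.i.d. within each sample, independence across samples
    (hiid1 : iIndepFun (fun i ω => (I i ω, X i ω, Y i ω)) μ)
    (hid1 : ∀ i, IdentDistrib (fun ω => (I i ω, X i ω, Y i ω))
      (fun ω => (I 0 ω, X 0 ω, Y 0 ω)) μ μ)
    (hiid2 : iIndepFun (fun j ω => (It j ω, Xt j ω)) μ)
    (hid2 : ∀ j, IdentDistrib (fun ω => (It j ω, Xt j ω))
      (fun ω => (It 0 ω, Xt 0 ω)) μ μ)
    (hindep : IndepFun (fun ω (i : ℕ) => (I i ω, X i ω, Y i ω))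
      (fun ω (j : ℕ) => (It j ω, Xt j ω)) μ)
    -- bounded fourth moments
    (hI4 : ∀ i k, MemLp (fun ω => I i ω k) 4 μ)
    (hX4 : ∀ i l, MemLp (fun ω => X i ω l) 4 μ)
    (hY4 : ∀ i, MemLp (Y i) 4 μ) (hε4 : ∀ i, MemLp (ε i) 4 μ)
    (hIt4 : ∀ j k, MemLp (fun ω => It j ω k) 4 μ)
    (hXt4 : ∀ j l, MemLp (fun ω => Xt j ω l) 4 μ)
    -- all variables are centered
    (hIc : ∀ i k, ∫ ω, I i ω k ∂μ = 0) (hXc : ∀ i l, ∫ ω, X i ω l ∂μ = 0)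
    (hYc : ∀ i, ∫ ω, Y i ω ∂μ = 0)
    (hItc : ∀ j k, ∫ ω, It j ω k ∂μ = 0) (hXtc : ∀ j l, ∫ ω, Xt j ω l ∂μ = 0)
    -- structural model Y_i = X_iᵀβ* + ε_i  and exogeneity E[ε_i | I_i] = 0
    (hmodel : ∀ i ω, Y i ω = (∑ l, X i ω l * βstar l) + ε i ω)
    (hexo : ∀ i, μ[ε i | MeasurableSpace.comap (I i) inferInstance] =ᵐ[μ] 0)
    -- Assumption 1 (i): Cov(Ĩ,X̃) = Cov(I,X)
    (hcov : covMat μ (It 0) (Xt 0) = covMat μ (I 0) (X 0))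
    -- rank condition
    (hrank : (covMat μ (I 0) (X 0)).rank = d)
    -- weight matrices W_N → W₀ in probability, W₀ positive definite
    (W : ℕ → Ω → Matrix (Fin m) (Fin m) ℝ)
    (W0 : Matrix (Fin m) (Fin m) ℝ) (hW0 : W0.PosDef)
    (hWmeas : ∀ N k l, Measurable fun ω => W N ω k l)
    (hWprob : ∀ k l, ∀ δ > (0:ℝ),
      Tendsto (fun N => μ {ω | δ ≤ |W N ω k l - W0 k l|}) atTop (𝓝 0))
    -- the GMM estimator: any minimizer of the GMM objective
    (bhat : ℕ → Ω → Fin d → ℝ)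
    (hbmeas : ∀ N, Measurable fun ω => bhat N ω)
    (hargmin : ∀ N ω (b : Fin d → ℝ),
      ghat I Y It Xt (n N) (nt N) ω (bhat N ω) ⬝ᵥ
          (W N ω *ᵥ ghat I Y It Xt (n N) (nt N) ω (bhat N ω))
        ≤ ghat I Y It Xt (n N) (nt N) ω b ⬝ᵥ
            (W N ω *ᵥ ghat I Y It Xt (n N) (nt N) ω b)) :
    -- conclusion: convergence in probability to β*
    ∀ δ > (0:ℝ),
      Tendsto (fun N => μ {ω | δ < norm2 (fun j => bhat N ω j - βstar j)})
        atTop (𝓝 0) := by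
  classical
  intro δ hδ
  rcases Nat.eq_zero_or_pos d with hd0 | hd
  · subst hd0
    have hempty : ∀ N, {ω | δ < norm2 (fun j => bhat N ω j - βstar j)} = (∅ : Set Ω) := by
      intro N
      ext ω
      simp only [Set.mem_setOf_eq, Set.mem_empty_iff_false, iff_false, not_lt]
      have h0 : norm2 (fun j : Fin 0 => bhat N ω j - βstar j) = 0 := by
        simp [norm2]
      rw [h0]; exact hδ.le
    simp only [hempty, measure_empty]
    exact tendsto_const_nhds
  have hdm : d ≤ m := by
    have h1 := Matrix.rank_le_card_height (covMat μ (I 0) (X 0))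
    rw [hrank] at h1
    simpa using h1
  have hm : 0 < m := lt_of_lt_of_le hd hdm
  set S : Matrix (Fin m) (Fin d) ℝ := covMat μ (I 0) (X 0) with hSdef
  have hinj : ∀ x : Fin d → ℝ, S *ᵥ x = 0 → x = 0 :=
    GMMAux.rank_inj S (by rw [hSdef]; exact hrank)
  obtain ⟨η, hη, hdet⟩ := GMMAux.det_bound hd hm S W0 βstar hinj hW0 hδ
  -- measurability of components
  have hImeas : ∀ i, Measurable (I i) := fun i => (hmeas i).fst
  have hXmeas : ∀ i, Measurable (X i) := fun i => (hmeas i).snd.fst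
  have hYmeas : ∀ i, Measurable (Y i) := fun i => (hmeas i).snd.snd
  have hItmeas : ∀ j, Measurable (It j) := fun j => (hmeast j).fst
  have hXtmeas : ∀ j, Measurable (Xt j) := fun j => (hmeast j).snd
  -- sample sizes tend to infinity
  have hnt : Tendsto nt atTop atTop := by
    rw [← tendsto_natCast_atTop_iff (R := ℝ)]
    have h1 : Tendsto (fun N : ℕ => (N : ℝ) * ((nt N : ℝ) / N)) atTop atTop :=
      (tendsto_natCast_atTop_atTop (R := ℝ)).atTop_mul_pos hτt.1 hτtlim
    refine Tendsto.congr' ?_ h1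
    filter_upwards [eventually_ge_atTop 1] with N hN
    have hN0 : (N : ℝ) ≠ 0 := Nat.cast_ne_zero.2 (by omega)
    field_simp
  have hn : Tendsto n atTop atTop := by
    rw [← tendsto_natCast_atTop_iff (R := ℝ)]
    have h1 : Tendsto (fun N : ℕ => (N : ℝ) * ((n N : ℝ) / N)) atTop atTop :=
      (tendsto_natCast_atTop_atTop (R := ℝ)).atTop_mul_pos hτ.1 hτlim
    refine Tendsto.congr' ?_ h1
    filter_upwards [eventually_ge_atTop 1] with N hN
    have hN0 : (N : ℝ) ≠ 0 := Nat.cast_ne_zero.2 (by omega)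
    field_simp
  -- a.s. limits for the empirical covariance entries
  have hSlim : ∀ (k : Fin m) (l : Fin d), ∀ᵐ ω ∂μ,
      Tendsto (fun N => covHat It Xt (nt N) ω k l) atTop (𝓝 (S k l)) := by
    intro k l
    have hφ : Measurable (fun p : (Fin m → ℝ) × (Fin d → ℝ) => p.1 k * p.2 l) :=
      ((measurable_pi_apply k).comp measurable_fst).mul
        ((measurable_pi_apply l).comp measurable_snd)
    have h := GMMAux.avg_tendsto (μ := μ) (fun j ω => (It j ω, Xt j ω))
      (fun p => p.1 k * p.2 l) hmeast hφ hiid2 hid2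
      (GMMAux.memL4_mul_integrable (hIt4 0 k) (hXt4 0 l))
    have hval : (∫ ω, It 0 ω k * Xt 0 ω l ∂μ) = S k l := by
      rw [← hcov]; rfl
    rw [hval] at h
    filter_upwards [h] with ω hω
    exact hω.comp hnt
  -- exogeneity: E[I₀ₖ ε₀] = 0
  have hIε : ∀ k : Fin m, ∫ ω, I 0 ω k * ε 0 ω ∂μ = 0 := by
    intro k
    have hI0 : Measurable (I 0) := hImeas 0
    have hm0 : MeasurableSpace.comap (I 0) inferInstance ≤ _ := hI0.comap_le
    haveI : IsFiniteMeasure (μ.trim hm0) := isFiniteMeasure_trim hm0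
    have hfmeas : StronglyMeasurable[MeasurableSpace.comap (I 0) inferInstance]
        (fun ω => I 0 ω k) := by
      have h1 : Measurable[MeasurableSpace.comap (I 0) inferInstance] (I 0) :=
        Measurable.of_comap_le le_rfl
      exact ((measurable_pi_apply k).comp h1).stronglyMeasurable
    have hεint : Integrable (ε 0) μ := (hε4 0).integrable (by norm_num)
    have hfg : Integrable ((fun ω => I 0 ω k) * ε 0) μ :=
      GMMAux.memL4_mul_integrable (hI4 0 k) (hε4 0)
    have hpull := condExp_mul_of_stronglyMeasurable_left hfmeas hfg hεint
    calc ∫ ω, I 0 ω k * ε 0 ω ∂μ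
        = ∫ ω, ((fun ω => I 0 ω k) * ε 0) ω ∂μ := rfl
      _ = ∫ ω, (μ[(fun ω => I 0 ω k) * ε 0 | MeasurableSpace.comap (I 0) inferInstance]) ω ∂μ :=
          (integral_condExp hm0).symm
      _ = ∫ ω, ((fun ω => I 0 ω k) *
            μ[ε 0 | MeasurableSpace.comap (I 0) inferInstance]) ω ∂μ :=
          integral_congr_ae hpull
      _ = ∫ ω, (0 : ℝ) ∂μ := by
          refine integral_congr_ae ?_
          filter_upwards [hexo 0] with ω h
          simp [h]
      _ = 0 := integral_zero _ _
  -- identification: E[I₀ₖ Y₀] = (S β*)ₖ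
  have hIY : ∀ k : Fin m, ∫ ω, I 0 ω k * Y 0 ω ∂μ = (S *ᵥ βstar) k := by
    intro k
    have hint1 : ∀ l, Integrable (fun ω => I 0 ω k * X 0 ω l * βstar l) μ := fun l =>
      (GMMAux.memL4_mul_integrable (hI4 0 k) (hX4 0 l)).mul_const _
    have hrw : (fun ω => I 0 ω k * Y 0 ω)
        = fun ω => (∑ l, I 0 ω k * X 0 ω l * βstar l) + I 0 ω k * ε 0 ω := by
      funext ω
      rw [hmodel 0 ω, mul_add, Finset.mul_sum]
      congr 1
      exact Finset.sum_congr rfl fun l _ => by ring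
    rw [hrw, integral_add (integrable_finset_sum _ (fun l _ => hint1 l))
      (GMMAux.memL4_mul_integrable (hI4 0 k) (hε4 0)),
      integral_finset_sum _ (fun l _ => hint1 l), hIε k, add_zero]
    have hterm : ∀ l : Fin d, ∫ ω, I 0 ω k * X 0 ω l * βstar l ∂μ = S k l * βstar l := by
      intro l
      rw [integral_mul_const]
      rfl
    rw [Finset.sum_congr rfl fun l _ => hterm l]
    rfl
  -- a.s. limits for the empirical covariance with Y
  have hvlim : ∀ k : Fin m, ∀ᵐ ω ∂μ,
      Tendsto (fun N => covYHat I Y (n N) ω k) atTop (𝓝 ((S *ᵥ βstar) k)) := by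
    intro k
    have hφ : Measurable (fun p : (Fin m → ℝ) × ((Fin d → ℝ) × ℝ) => p.1 k * p.2.2) :=
      ((measurable_pi_apply k).comp measurable_fst).mul (measurable_snd.comp measurable_snd)
    have h := GMMAux.avg_tendsto (μ := μ) (fun i ω => (I i ω, X i ω, Y i ω))
      (fun p => p.1 k * p.2.2) hmeas hφ hiid1 hid1
      (GMMAux.memL4_mul_integrable (hI4 0 k) (hY4 0))
    rw [hIY k] at h
    filter_upwards [h] with ω hω
    exact hω.comp hn
  -- convergence in probability of each entry
  have hSmeasN : ∀ (c : ℕ) (k : Fin m) (l : Fin d),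
      Measurable (fun ω => covHat It Xt c ω k l) := by
    intro c k l
    show Measurable fun ω => (c : ℝ)⁻¹ * ∑ j ∈ Finset.range c, It j ω k * Xt j ω l
    apply Measurable.const_mul
    apply Finset.measurable_sum
    intro j _
    exact ((measurable_pi_apply k).comp (hItmeas j)).mul
      ((measurable_pi_apply l).comp (hXtmeas j))
  have hvmeasN : ∀ (c : ℕ) (k : Fin m), Measurable (fun ω => covYHat I Y c ω k) := by
    intro c k
    show Measurable fun ω => (c : ℝ)⁻¹ * ∑ i ∈ Finset.range c, I i ω k * Y i ω
    apply Measurable.const_mul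
    apply Finset.measurable_sum
    intro i _
    exact ((measurable_pi_apply k).comp (hImeas i)).mul (hYmeas i)
  have hSprob : ∀ (k : Fin m) (l : Fin d),
      Tendsto (fun N => μ {ω | η ≤ |covHat It Xt (nt N) ω k l - S k l|}) atTop (𝓝 0) := by
    intro k l
    have h := tendstoInMeasure_of_tendsto_ae
      (f := fun N ω => covHat It Xt (nt N) ω k l) (g := fun _ => S k l)
      (fun N => (hSmeasN (nt N) k l).aestronglyMeasurable) (hSlim k l)
    have h2 := tendstoInMeasure_iff_norm.1 h η hη
    simpa [Real.norm_eq_abs] using h2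
  have hvprob : ∀ k : Fin m,
      Tendsto (fun N => μ {ω | η ≤ |covYHat I Y (n N) ω k - (S *ᵥ βstar) k|}) atTop (𝓝 0) := by
    intro k
    have h := tendstoInMeasure_of_tendsto_ae
      (f := fun N ω => covYHat I Y (n N) ω k) (g := fun _ => (S *ᵥ βstar) k)
      (fun N => (hvmeasN (n N) k).aestronglyMeasurable) (hvlim k)
    have h2 := tendstoInMeasure_iff_norm.1 h η hη
    simpa [Real.norm_eq_abs] using h2
  -- union bound
  have key : ∀ N, μ {ω | δ < norm2 (fun j => bhat N ω j - βstar j)} ≤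
      (∑ k, ∑ l, μ {ω | η ≤ |covHat It Xt (nt N) ω k l - S k l|}) +
      ((∑ k, μ {ω | η ≤ |covYHat I Y (n N) ω k - (S *ᵥ βstar) k|}) +
      (∑ k, ∑ l, μ {ω | η ≤ |W N ω k l - W0 k l|})) := by
    intro N
    have hsub : {ω | δ < norm2 (fun j => bhat N ω j - βstar j)} ⊆
        (⋃ k, ⋃ l, {ω | η ≤ |covHat It Xt (nt N) ω k l - S k l|}) ∪
        ((⋃ k, {ω | η ≤ |covYHat I Y (n N) ω k - (S *ᵥ βstar) k|}) ∪
        (⋃ k, ⋃ l, {ω | η ≤ |W N ω k l - W0 k l|})) := by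
      intro ω hω
      by_contra hc
      simp only [Set.mem_union, Set.mem_iUnion, Set.mem_setOf_eq, not_or, not_exists,
        not_le] at hc
      obtain ⟨h1, h2, h3⟩ := hc
      have hb := hdet (covHat It Xt (nt N) ω) (covYHat I Y (n N) ω) (W N ω) (bhat N ω)
        h1 h2 h3 (fun b => hargmin N ω b)
      exact absurd hb (not_le.2 hω)
    refine (measure_mono hsub).trans ?_
    refine (measure_union_le _ _).trans ?_
    refine add_le_add (GMMAux.meas_iUnion2_le_sum μ _) ?_
    refine (measure_union_le _ _).trans ?_
    exact add_le_add (GMMAux.meas_iUnion_le_sum μ _) (GMMAux.meas_iUnion2_le_sum μ _)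
  -- each sum tends to zero
  have htS : Tendsto (fun N => ∑ k, ∑ l,
      μ {ω | η ≤ |covHat It Xt (nt N) ω k l - S k l|}) atTop (𝓝 0) := by
    have h := tendsto_finset_sum (Finset.univ : Finset (Fin m))
      (fun k _ => tendsto_finset_sum (Finset.univ : Finset (Fin d)) (fun l _ => hSprob k l))
    simpa using h
  have htv : Tendsto (fun N => ∑ k,
      μ {ω | η ≤ |covYHat I Y (n N) ω k - (S *ᵥ βstar) k|}) atTop (𝓝 0) := by
    have h := tendsto_finset_sum (Finset.univ : Finset (Fin m)) (fun k _ => hvprob k)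
    simpa using h
  have htW : Tendsto (fun N => ∑ k, ∑ l,
      μ {ω | η ≤ |W N ω k l - W0 k l|}) atTop (𝓝 0) := by
    have h := tendsto_finset_sum (Finset.univ : Finset (Fin m))
      (fun k _ => tendsto_finset_sum (Finset.univ : Finset (Fin m))
        (fun l _ => hWprob k l η hη))
    simpa using h
  have hbound : Tendsto (fun N =>
      (∑ k, ∑ l, μ {ω | η ≤ |covHat It Xt (nt N) ω k l - S k l|}) +
      ((∑ k, μ {ω | η ≤ |covYHat I Y (n N) ω k - (S *ᵥ βstar) k|}) +
      (∑ k, ∑ l, μ {ω | η ≤ |W N ω k l - W0 k l|}))) atTop (𝓝 0) := by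
    have h := htS.add (htv.add htW)
    simpa using h
  exact tendsto_of_tendsto_of_tendsto_of_le_of_le tendsto_const_nhds hbound
    (fun N => zero_le) key
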